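/- arXiv:1807.01750 — 3 statements merged into one kernel-verified Lean document; each statement's English description precedes it below -/
import Mathlib

section
/- Let h > 0 and let K(z) = exp(−‖z‖²/(2h)) be the Gaussian kernel on ℝ^D. Let q be a probability density on ℝ^D that is continuously differentiable, strictly positive, with ∇q integrable, and such that q(x) → 0 as ‖x‖ → ∞. Let p be a continuously differentiable strictly positive probability density with ∫ ‖∇log p(x)‖ q(x) dx < ∞. Then for every y ∈ ℝ^D, ∫_{ℝ^D} [K(x − y) ∇log p(x) + ∇_x K(x − y)] q(x) dx = ∫_{ℝ^D} K(x − y) (∇log p(x) − ∇log q(x)) q(x) dx. -/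
open MeasureTheory Filter
open InnerProductSpace
open scoped RealInnerProductSpace

private lemma svgd_aux_gauss (D : ℕ) {b : ℝ} (hb : 0 < b) :
    Integrable (fun x : EuclideanSpace ℝ (Fin D) => Real.exp (-b * ‖x‖^2)) := by
  have h := (GaussianFourier.integrable_cexp_neg_mul_sq_norm_add
    (V := EuclideanSpace ℝ (Fin D)) (b := (b : ℂ)) (by simpa using hb) 0 0).norm
  simpa [Complex.norm_exp, ← Complex.ofReal_pow] using h

private lemma svgd_aux_gaussnorm (D : ℕ) {h : ℝ} (hh : 0 < h) :
    Integrable (fun x : EuclideanSpace ℝ (Fin D) => ‖x‖ * Real.exp (-‖x‖^2/(2*h))) := by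
  have h4 : (0:ℝ) < (4*h)⁻¹ := by positivity
  apply Integrable.mono ((svgd_aux_gauss D h4).const_mul (1 + 4*h))
  · exact (continuous_norm.mul
      (((continuous_norm.pow 2).neg.div_const _).rexp)).aestronglyMeasurable
  · filter_upwards with x
    set t := ‖x‖ with ht
    have ht0 : 0 ≤ t := norm_nonneg x
    have key : t * Real.exp (-t^2/(2*h)) ≤ (1 + 4*h) * Real.exp (-(4*h)⁻¹ * t^2) := by
      have e1 : Real.exp (-t^2/(2*h)) = Real.exp (-(4*h)⁻¹*t^2) * Real.exp (-(4*h)⁻¹*t^2) := by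
        rw [← Real.exp_add]; congr 1; field_simp; ring
      rw [e1, ← mul_assoc]
      have hb : t * Real.exp (-(4*h)⁻¹*t^2) ≤ 1 + 4*h := by
        have hexple : ∀ u : ℝ, u ≤ Real.exp u := fun u =>
          (Real.add_one_le_exp u).trans' (by linarith)
        have h1 : (4*h)⁻¹ * t^2 ≤ Real.exp ((4*h)⁻¹*t^2) := hexple _
        have h2 : Real.exp (-(4*h)⁻¹*t^2) = (Real.exp ((4*h)⁻¹*t^2))⁻¹ := by
          rw [← Real.exp_neg]; ring_nf
        have hep : 0 < Real.exp ((4*h)⁻¹*t^2) := Real.exp_pos _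
        rw [h2]
        rcases le_total t 1 with htle | htge
        · have : Real.exp ((4*h)⁻¹*t^2) ≥ 1 := Real.one_le_exp (by positivity)
          calc t * (Real.exp ((4*h)⁻¹*t^2))⁻¹ ≤ 1 * 1 := by
                apply mul_le_mul htle _ (by positivity) one_pos.le
                rw [inv_le_one_iff₀]; right; exact this
          _ ≤ 1 + 4*h := by linarith
        · have : t ≤ t^2 := by nlinarith
          have h3 : t^2 ≤ 4*h * Real.exp ((4*h)⁻¹*t^2) := by
            calc t^2 = 4*h * ((4*h)⁻¹ * t^2) := by field_simp
            _ ≤ 4*h * Real.exp ((4*h)⁻¹*t^2) := by gcongr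
          calc t * (Real.exp ((4*h)⁻¹*t^2))⁻¹
              ≤ (4*h * Real.exp ((4*h)⁻¹*t^2)) * (Real.exp ((4*h)⁻¹*t^2))⁻¹ :=
                mul_le_mul_of_nonneg_right (this.trans h3) (by positivity)
          _ = 4*h := by field_simp
          _ ≤ 1 + 4*h := by linarith
      exact mul_le_mul_of_nonneg_right hb (Real.exp_pos _).le
    have hr : ‖(1 + 4*h) * Real.exp (-(4*h)⁻¹ * t^2)‖
        = (1 + 4*h) * Real.exp (-(4*h)⁻¹ * t^2) := by
      rw [Real.norm_eq_abs, abs_of_nonneg (by positivity)]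
    rw [Real.norm_eq_abs, abs_of_nonneg (by positivity), hr]
    exact key

private lemma svgd_aux_bdd {D : ℕ} (q : EuclideanSpace ℝ (Fin D) → ℝ) (hc : Continuous q)
    (hqdecay : Tendsto q (cocompact (EuclideanSpace ℝ (Fin D))) (nhds 0)) :
    ∃ C : ℝ, ∀ x, |q x| ≤ C := by
  obtain ⟨C, hC⟩ := ZeroAtInftyContinuousMap.bounded
    (⟨⟨q, hc⟩, hqdecay⟩ : ZeroAtInftyContinuousMap (EuclideanSpace ℝ (Fin D)) ℝ)
  refine ⟨C + |q 0|, fun x => ?_⟩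
  have := hC x 0
  simp only [ZeroAtInftyContinuousMap.coe_mk, ContinuousMap.coe_mk, Real.dist_eq] at this
  calc |q x| ≤ |q x - q 0| + |q 0| := by simpa using abs_add_le (q x - q 0) (q 0)
  _ ≤ C + |q 0| := by gcongr

private lemma svgd_aux_inner_grad {D : ℕ} (f : EuclideanSpace ℝ (Fin D) → ℝ)
    (x v : EuclideanSpace ℝ (Fin D)) : ⟪gradient f x, v⟫ = fderiv ℝ f x v := by
  rw [gradient, toDual_symm_apply]

private lemma svgd_aux_norm_grad {D : ℕ} (f : EuclideanSpace ℝ (Fin D) → ℝ)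
    (x : EuclideanSpace ℝ (Fin D)) : ‖gradient f x‖ = ‖fderiv ℝ f x‖ := by
  rw [gradient]; exact LinearIsometryEquiv.norm_map _ _

private lemma svgd_aux_cont_grad {D : ℕ} (f : EuclideanSpace ℝ (Fin D) → ℝ)
    (hf : ContDiff ℝ 1 f) : Continuous (fun x => gradient f x) := by
  simp only [gradient]
  exact (LinearIsometryEquiv.continuous _).comp (hf.continuous_fderiv one_ne_zero)

private lemma svgd_aux_inner_integral {D : ℕ} (f : EuclideanSpace ℝ (Fin D) → EuclideanSpace ℝ (Fin D))
    (hf : Integrable f) (v : EuclideanSpace ℝ (Fin D)) :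
    ⟪∫ x, f x, v⟫ = ∫ x, ⟪f x, v⟫ := by
  rw [real_inner_comm, ← integral_inner hf]
  exact integral_congr_ae (Filter.Eventually.of_forall fun x => real_inner_comm _ _)

set_option maxHeartbeats 1600000 in
/-- With the Gaussian kernel `K(z) = exp(−‖z‖²/(2h))`, for suitable densities
`p, q` on `ℝ^D`, the SVGD vector field is the kernel smoothing of the Wasserstein gradient-flow
vector field `∇log p − ∇log q` against `q`:
`∫ [K(x−y) ∇log p(x) + ∇ₓK(x−y)] q(x) dx = ∫ K(x−y) (∇log p(x) − ∇log q(x)) q(x) dx`. -/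
theorem svgd_field_eq_smoothed_gradient_flow_field
    (D : ℕ) (h : ℝ) (hh : 0 < h)
    (K : EuclideanSpace ℝ (Fin D) → ℝ)
    (hK : K = fun z => Real.exp (-‖z‖ ^ 2 / (2 * h)))
    (p q : EuclideanSpace ℝ (Fin D) → ℝ)
    (hq : ContDiff ℝ 1 q) (hqpos : ∀ x, 0 < q x)
    (hqprob : ∫ x, q x = 1)
    (hqgrad : Integrable (fun x => gradient q x))
    (hqdecay : Tendsto q (cocompact (EuclideanSpace ℝ (Fin D))) (nhds 0))
    (hp : ContDiff ℝ 1 p) (hppos : ∀ x, 0 < p x)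
    (hpprob : ∫ x, p x = 1)
    (hplog : Integrable (fun x => ‖(p x)⁻¹ • gradient p x‖ * q x)) :
    ∀ y : EuclideanSpace ℝ (Fin D),
      ∫ x, q x • (K (x - y) • ((p x)⁻¹ • gradient p x)
            + gradient (fun x' => K (x' - y)) x)
        = ∫ x, (q x * K (x - y)) •
            ((p x)⁻¹ • gradient p x - (q x)⁻¹ • gradient q x) := by
  intro y
  -- basic facts about K
  have hK0 : ∀ z, 0 < K z := by intro z; rw [hK]; exact Real.exp_pos _
  have hK1 : ∀ z, K z ≤ 1 := by
    intro z; rw [hK]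
    apply Real.exp_le_one_iff.mpr
    apply div_nonpos_of_nonpos_of_nonneg (neg_nonpos.2 (by positivity)) (by positivity)
  have hKcont : Continuous K := by
    rw [hK]; exact (((continuous_norm.pow 2).neg.div_const _).rexp)
  have hKyCD : ContDiff ℝ 1 (fun x : EuclideanSpace ℝ (Fin D) => K (x - y)) := by
    rw [hK]
    exact Real.contDiff_exp.comp
      (((contDiff_id.sub contDiff_const).norm_sq ℝ).neg.div_const _)
  have hKderiv : ∀ x, HasFDerivAt (fun x' : EuclideanSpace ℝ (Fin D) => K (x' - y))
      ((-h⁻¹ * K (x - y)) • innerSL ℝ (x - y)) x := by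
    intro x
    rw [hK]
    have h1 : HasFDerivAt (fun x' : EuclideanSpace ℝ (Fin D) => x' - y)
        (ContinuousLinearMap.id ℝ _) x := (hasFDerivAt_id x).sub_const y
    have h2 : HasFDerivAt (fun x' : EuclideanSpace ℝ (Fin D) => ‖x' - y‖^2)
        (2 • (innerSL ℝ (x - y))) x := by
      simpa using h1.norm_sq
    have h3 := h2.const_mul (-(2*h)⁻¹)
    have h4 := (Real.hasDerivAt_exp (-(2*h)⁻¹ * ‖x - y‖^2)).comp_hasFDerivAt x h3
    have e : ∀ z : EuclideanSpace ℝ (Fin D), -(2*h)⁻¹ * ‖z‖^2 = -‖z‖^2/(2*h) := by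
      intro z; field_simp
    simp only [e] at h4
    refine h4.congr_fderiv ?_
    ext v
    simp [smul_smul, two_smul]
    ring
  have hKydiff : Differentiable ℝ (fun x : EuclideanSpace ℝ (Fin D) => K (x - y)) :=
    fun x => (hKderiv x).differentiableAt
  have hfderivKy : ∀ x, fderiv ℝ (fun x' : EuclideanSpace ℝ (Fin D) => K (x' - y)) x
      = (-h⁻¹ * K (x - y)) • innerSL ℝ (x - y) := fun x => (hKderiv x).fderiv
  have hfderivKy_norm : ∀ x, ‖fderiv ℝ (fun x' : EuclideanSpace ℝ (Fin D) => K (x' - y)) x‖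
      ≤ h⁻¹ * (‖x - y‖ * K (x - y)) := by
    intro x
    rw [hfderivKy x, norm_smul, innerSL_apply_norm]
    rw [Real.norm_eq_abs, abs_mul, abs_neg, abs_of_nonneg (by positivity),
      abs_of_nonneg (hK0 _).le]
    ring_nf; exact le_rfl
  -- integrability of q
  have hqcont : Continuous q := hq.continuous
  have hqint : Integrable q := by
    by_contra hc
    rw [integral_undef hc] at hqprob
    norm_num at hqprob
  obtain ⟨Cq, hCq⟩ := svgd_aux_bdd q hqcont hqdecay
  have hCq0 : 0 ≤ Cq := (abs_nonneg _).trans (hCq 0)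
  -- the Gaussian weight is integrable
  have hGnorm : Integrable (fun x : EuclideanSpace ℝ (Fin D) => ‖x - y‖ * K (x - y)) := by
    rw [hK]
    exact (svgd_aux_gaussnorm D hh).comp_sub_right y
  -- continuity of the gradients
  have hgradp_cont : Continuous (fun x => gradient p x) := svgd_aux_cont_grad p hp
  have hgradq_cont : Continuous (fun x => gradient q x) := svgd_aux_cont_grad q hq
  have hgradKy_cont : Continuous (fun x => gradient
      (fun x' : EuclideanSpace ℝ (Fin D) => K (x' - y)) x) := svgd_aux_cont_grad _ hKyCD
  have hgradKy_norm : ∀ x, ‖gradient (fun x' : EuclideanSpace ℝ (Fin D) => K (x' - y)) x‖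
      ≤ h⁻¹ * (‖x - y‖ * K (x - y)) := by
    intro x; rw [svgd_aux_norm_grad]; exact hfderivKy_norm x
  have hKycont : Continuous (fun x : EuclideanSpace ℝ (Fin D) => K (x - y)) :=
    hKcont.comp (continuous_id.sub continuous_const)
  have hAcont : Continuous (fun x => (p x)⁻¹ • gradient p x) :=
    (hp.continuous.inv₀ (fun x => (hppos x).ne')).smul hgradp_cont
  -- integrability of the three pieces
  have I1 : Integrable (fun x => (q x * K (x - y)) • ((p x)⁻¹ • gradient p x)) := by
    apply Integrable.mono hplog
    · exact (((hqcont.mul hKycont).smul hAcont)).aestronglyMeasurable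
    · filter_upwards with x
      rw [norm_smul, Real.norm_eq_abs, abs_mul, abs_of_nonneg (hqpos x).le,
        abs_of_nonneg (hK0 _).le, Real.norm_eq_abs, abs_of_nonneg
          (mul_nonneg (norm_nonneg _) (hqpos x).le : (0:ℝ) ≤ ‖(p x)⁻¹ • gradient p x‖ * q x)]
      calc q x * K (x - y) * ‖(p x)⁻¹ • gradient p x‖
          ≤ q x * 1 * ‖(p x)⁻¹ • gradient p x‖ := by
            apply mul_le_mul_of_nonneg_right _ (norm_nonneg _)
            exact mul_le_mul_of_nonneg_left (hK1 _) (hqpos x).le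
      _ = ‖(p x)⁻¹ • gradient p x‖ * q x := by ring
  have I2 : Integrable (fun x => q x • gradient
      (fun x' : EuclideanSpace ℝ (Fin D) => K (x' - y)) x) := by
    apply Integrable.mono (hGnorm.const_mul (Cq * h⁻¹))
    · exact (hqcont.smul hgradKy_cont).aestronglyMeasurable
    · filter_upwards with x
      rw [norm_smul, Real.norm_eq_abs, Real.norm_eq_abs,
        abs_of_nonneg (mul_nonneg (mul_nonneg hCq0 (by positivity)) (mul_nonneg (norm_nonneg _) (hK0 _).le) : (0:ℝ) ≤ Cq * h⁻¹ * (‖x - y‖ * K (x - y)))]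
      calc |q x| * ‖gradient (fun x' : EuclideanSpace ℝ (Fin D) => K (x' - y)) x‖
          ≤ Cq * (h⁻¹ * (‖x - y‖ * K (x - y))) := by
            apply mul_le_mul (hCq x) (hgradKy_norm x) (norm_nonneg _)
            exact (abs_nonneg _).trans (hCq x)
      _ = Cq * h⁻¹ * (‖x - y‖ * K (x - y)) := by ring
  have I3 : Integrable (fun x => K (x - y) • gradient q x) := by
    apply Integrable.mono hqgrad
    · exact (hKycont.smul hgradq_cont).aestronglyMeasurable
    · filter_upwards with x
      rw [norm_smul, Real.norm_eq_abs, abs_of_nonneg (hK0 _).le]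
      calc K (x - y) * ‖gradient q x‖ ≤ 1 * ‖gradient q x‖ :=
            mul_le_mul_of_nonneg_right (hK1 _) (norm_nonneg _)
      _ = ‖gradient q x‖ := one_mul _
  have I4 : Integrable (fun x => q x * K (x - y)) := by
    apply Integrable.mono hqint
    · exact (hqcont.mul hKycont).aestronglyMeasurable
    · filter_upwards with x
      rw [Real.norm_eq_abs, Real.norm_eq_abs, abs_mul]
      calc |q x| * |K (x - y)| ≤ |q x| * 1 := by
            apply mul_le_mul_of_nonneg_left _ (abs_nonneg _)
            rw [abs_of_nonneg (hK0 _).le]; exact hK1 _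
      _ = |q x| := mul_one _
  -- the key integration-by-parts identity
  have key : ∫ x, q x • gradient (fun x' : EuclideanSpace ℝ (Fin D) => K (x' - y)) x
      = - ∫ x, K (x - y) • gradient q x := by
    apply ext_inner_right ℝ
    intro v
    rw [inner_neg_left, svgd_aux_inner_integral _ I2, svgd_aux_inner_integral _ I3]
    have e2 : ∀ x, ⟪q x • gradient (fun x' : EuclideanSpace ℝ (Fin D) => K (x' - y)) x, v⟫
        = q x * fderiv ℝ (fun x' : EuclideanSpace ℝ (Fin D) => K (x' - y)) x v := by
      intro x
      rw [real_inner_smul_left, svgd_aux_inner_grad]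
    have e3 : ∀ x, ⟪K (x - y) • gradient q x, v⟫ = fderiv ℝ q x v * K (x - y) := by
      intro x
      rw [real_inner_smul_left, svgd_aux_inner_grad]; ring
    simp only [e2, e3]
    -- integrability of the scalar integrands
    have J1 : Integrable (fun x => fderiv ℝ q x v * K (x - y)) := by
      apply Integrable.mono (hqgrad.norm.const_mul ‖v‖)
      · exact (((hq.continuous_fderiv one_ne_zero).clm_apply continuous_const).mul
          hKycont).aestronglyMeasurable
      · filter_upwards with x
        rw [Real.norm_eq_abs, Real.norm_eq_abs, abs_mul,
          abs_of_nonneg (by positivity : (0:ℝ) ≤ ‖v‖ * ‖gradient q x‖)]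
        calc |fderiv ℝ q x v| * |K (x - y)| ≤ |fderiv ℝ q x v| * 1 := by
              apply mul_le_mul_of_nonneg_left _ (abs_nonneg _)
              rw [abs_of_nonneg (hK0 _).le]; exact hK1 _
        _ = |fderiv ℝ q x v| := mul_one _
        _ ≤ ‖fderiv ℝ q x‖ * ‖v‖ := (fderiv ℝ q x).le_opNorm v
        _ = ‖v‖ * ‖gradient q x‖ := by rw [svgd_aux_norm_grad]; ring
    have J2 : Integrable (fun x => q x * fderiv ℝ
        (fun x' : EuclideanSpace ℝ (Fin D) => K (x' - y)) x v) := by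
      apply Integrable.mono (hGnorm.const_mul (Cq * h⁻¹ * ‖v‖))
      · exact (hqcont.mul ((hKyCD.continuous_fderiv one_ne_zero).clm_apply
          continuous_const)).aestronglyMeasurable
      · filter_upwards with x
        rw [Real.norm_eq_abs, Real.norm_eq_abs, abs_mul,
          abs_of_nonneg (mul_nonneg (mul_nonneg (mul_nonneg hCq0 (by positivity)) (norm_nonneg _)) (mul_nonneg (norm_nonneg _) (hK0 _).le) : (0:ℝ) ≤ Cq * h⁻¹ * ‖v‖ * (‖x - y‖ * K (x - y)))]
        have hb1 : |fderiv ℝ (fun x' : EuclideanSpace ℝ (Fin D) => K (x' - y)) x v|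
            ≤ h⁻¹ * (‖x - y‖ * K (x - y)) * ‖v‖ := by
          calc |fderiv ℝ (fun x' : EuclideanSpace ℝ (Fin D) => K (x' - y)) x v|
              ≤ ‖fderiv ℝ (fun x' : EuclideanSpace ℝ (Fin D) => K (x' - y)) x‖ * ‖v‖ :=
                (fderiv ℝ (fun x' : EuclideanSpace ℝ (Fin D) => K (x' - y)) x).le_opNorm v
          _ ≤ h⁻¹ * (‖x - y‖ * K (x - y)) * ‖v‖ :=
                mul_le_mul_of_nonneg_right (hfderivKy_norm x) (norm_nonneg _)
        calc |q x| * |fderiv ℝ (fun x' : EuclideanSpace ℝ (Fin D) => K (x' - y)) x v|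
            ≤ Cq * (h⁻¹ * (‖x - y‖ * K (x - y)) * ‖v‖) := by
              apply mul_le_mul (hCq x) hb1 (abs_nonneg _)
              exact (abs_nonneg _).trans (hCq x)
        _ = Cq * h⁻¹ * ‖v‖ * (‖x - y‖ * K (x - y)) := by ring
    exact integral_mul_fderiv_eq_neg_fderiv_mul_of_integrable (μ := volume) J1 J2 I4
      (fun x _ => hq.differentiable one_ne_zero x) (fun x _ => hKydiff x)
  -- pointwise rewriting of both sides
  have e1 : ∫ x, q x • (K (x - y) • ((p x)⁻¹ • gradient p x)
      + gradient (fun x' : EuclideanSpace ℝ (Fin D) => K (x' - y)) x)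
      = ∫ x, ((q x * K (x - y)) • ((p x)⁻¹ • gradient p x)
        + q x • gradient (fun x' : EuclideanSpace ℝ (Fin D) => K (x' - y)) x) := by
    apply integral_congr_ae
    filter_upwards with x
    rw [smul_add, smul_smul]
  have e4 : ∫ x, (q x * K (x - y)) • ((p x)⁻¹ • gradient p x - (q x)⁻¹ • gradient q x)
      = ∫ x, ((q x * K (x - y)) • ((p x)⁻¹ • gradient p x) - K (x - y) • gradient q x) := by
    apply integral_congr_ae
    filter_upwards with x
    rw [smul_sub, smul_smul, smul_smul, show q x * K (x - y) * (q x)⁻¹ = K (x - y) by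
      rw [mul_comm (q x) (K (x - y)), mul_assoc, mul_inv_cancel₀ (hqpos x).ne', mul_one]]
  rw [e1, e4, integral_add I1 I2, integral_sub I1 I3, key]
  abel
end

section
/- Let n ≥ 2 be an integer, I_n = ∫_{−1}^{1} (1 − x²)^n dx = √π Γ(n+1)/Γ(n+3/2), and χ_n(x) = I_n^{−1/2}(1 − x²)^{n/2} for x ∈ (−1,1). Then the derivative of χ_n at the point x = −1/√n equals π^{−1/4} √(Γ(n+3/2)/Γ(n+1)) · √n · (1 − 1/n)^{(n−2)/2}, and this value is strictly greater than π^{−1/4} √n (1 − 1/n)^{(n−2)/2}. -/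
open MeasureTheory

/-- `I_n = ∫_{−1}^{1} (1 − x²)^n dx` (which equals `√π Γ(n+1)/Γ(n+3/2)`). -/
noncomputable def In (n : ℕ) : ℝ := ∫ x in (-1:ℝ)..1, (1 - x ^ 2) ^ n

/-- The normalized bump function `χ_n(x) = I_n^{−1/2} (1 − x²)^{n/2}` on `[−1, 1]`,
extended by `0` outside. -/
noncomputable def chi (n : ℕ) (x : ℝ) : ℝ :=
  if x ∈ Set.Icc (-1 : ℝ) 1 then (In n) ^ (-(1:ℝ)/2) * (1 - x ^ 2) ^ ((n : ℝ)/2) else 0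

lemma In_rec (n : ℕ) : (2*(n:ℝ)+3) * In (n+1) = (2*(n:ℝ)+2) * In n := by
  have hderiv : ∀ x ∈ Set.uIcc (-1:ℝ) 1,
      HasDerivAt (fun x : ℝ => x * (1 - x^2)^(n+1))
        ((2*(n:ℝ)+3)*(1-x^2)^(n+1) - (2*(n:ℝ)+2)*(1-x^2)^n) x := by
    intro x _
    have hq : HasDerivAt (fun x : ℝ => 1 - x^2) (-(2*x)) x := by
      simpa using (hasDerivAt_pow 2 x).const_sub 1
    have hp := hq.pow (n+1)
    have hF : HasDerivAt (fun x : ℝ => x * (1 - x^2)^(n+1)) _ x := (hasDerivAt_id x).mul hp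
    convert hF using 1
    simp only [Nat.add_sub_cancel, id_eq]
    push_cast
    rw [pow_succ]
    ring
  have key := intervalIntegral.integral_eq_sub_of_hasDerivAt hderiv
    (by apply Continuous.intervalIntegrable; continuity)
  have h0 : (∫ x in (-1:ℝ)..1,
      ((2*(n:ℝ)+3)*(1-x^2)^(n+1) - (2*(n:ℝ)+2)*(1-x^2)^n)) = 0 := by
    rw [key]; norm_num
  have hi1 : IntervalIntegrable (fun x : ℝ => (1-x^2)^(n+1)) volume (-1) 1 := by
    apply Continuous.intervalIntegrable; continuity
  have hi0 : IntervalIntegrable (fun x : ℝ => (1-x^2)^n) volume (-1) 1 := by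
    apply Continuous.intervalIntegrable; continuity
  rw [intervalIntegral.integral_sub (hi1.const_mul _) (hi0.const_mul _),
    intervalIntegral.integral_const_mul, intervalIntegral.integral_const_mul] at h0
  unfold In
  linarith

lemma Gamma_n_pos (n : ℕ) : 0 < Real.Gamma ((n:ℝ) + 3/2) :=
  Real.Gamma_pos_of_pos (by positivity)

lemma In_eq (n : ℕ) : In n = Real.sqrt Real.pi * Real.Gamma ((n:ℝ)+1) / Real.Gamma ((n:ℝ) + 3/2) := by
  induction n with
  | zero =>
    have h32 : Real.Gamma ((0:ℝ) + 3/2) = (1/2) * Real.sqrt Real.pi := by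
      have : ((0:ℝ) + 3/2) = (1/2 : ℝ) + 1 := by norm_num
      rw [this, Real.Gamma_add_one (by norm_num), Real.Gamma_one_half_eq]
    have h1 : Real.Gamma ((0:ℝ)+1) = 1 := by norm_num [Real.Gamma_one]
    have hpi : Real.sqrt Real.pi ≠ 0 := ne_of_gt (Real.sqrt_pos.mpr Real.pi_pos)
    have : In 0 = 2 := by
      unfold In; simp; norm_num
    rw [this]
    push_cast
    rw [h1, h32, mul_one, eq_div_iff (by positivity)]
    ring
  | succ n ih =>
    have hrec := In_rec n
    have h1 : Real.Gamma ((n:ℝ)+1+1) = ((n:ℝ)+1) * Real.Gamma ((n:ℝ)+1) := by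
      rw [Real.Gamma_add_one (by positivity)]
    have h2 : Real.Gamma ((n:ℝ)+3/2+1) = ((n:ℝ)+3/2) * Real.Gamma ((n:ℝ)+3/2) := by
      rw [Real.Gamma_add_one (by positivity)]
    have hg1 : 0 < Real.Gamma ((n:ℝ)+1) := Real.Gamma_pos_of_pos (by positivity)
    have hg2 : 0 < Real.Gamma ((n:ℝ)+3/2) := Gamma_n_pos n
    have hc1 : ((n:ℕ)+1 : ℝ) + 1 = (n:ℝ)+1+1 := by push_cast; ring
    have hc2 : ((n:ℕ)+1 : ℝ) + 3/2 = (n:ℝ)+3/2+1 := by push_cast; ring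
    push_cast
    rw [show (n:ℝ)+1+1 = ((n:ℝ)+1)+1 by ring, h1,
      show (n:ℝ)+1+3/2 = ((n:ℝ)+3/2)+1 by ring, h2]
    rw [ih] at hrec
    have h3 : (2*(n:ℝ)+3) ≠ 0 := by positivity
    have : In (n+1) = (2*(n:ℝ)+2) * (Real.sqrt Real.pi * Real.Gamma ((n:ℝ)+1) / Real.Gamma ((n:ℝ)+3/2)) / (2*(n:ℝ)+3) := by
      field_simp at hrec ⊢; linarith
    rw [this]
    field_simp

lemma In_pos (n : ℕ) : 0 < In n := by
  rw [In_eq]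
  have := Real.Gamma_pos_of_pos (show (0:ℝ) < (n:ℝ)+1 by positivity)
  have := Gamma_n_pos n
  have := Real.sqrt_pos.mpr Real.pi_pos
  positivity

/-- For `n ≥ 2`, the derivative of `χ_n` at `x = −1/√n` equals
`π^{−1/4} √(Γ(n+3/2)/Γ(n+1)) √n (1 − 1/n)^{(n−2)/2}`, and this value is strictly larger
than `π^{−1/4} √n (1 − 1/n)^{(n−2)/2}`. -/
theorem chi_hasDerivAt_neg_one_div_sqrt (n : ℕ) (hn : 2 ≤ n) :
    HasDerivAt (chi n)
      (Real.pi ^ (-(1:ℝ)/4) * Real.sqrt (Real.Gamma (n + 3/2) / Real.Gamma (n + 1))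
        * Real.sqrt n * (1 - 1/(n:ℝ)) ^ (((n:ℝ) - 2)/2))
      (-1 / Real.sqrt n)
    ∧ Real.pi ^ (-(1:ℝ)/4) * Real.sqrt n * (1 - 1/(n:ℝ)) ^ (((n:ℝ) - 2)/2)
      < Real.pi ^ (-(1:ℝ)/4) * Real.sqrt (Real.Gamma (n + 3/2) / Real.Gamma (n + 1))
        * Real.sqrt n * (1 - 1/(n:ℝ)) ^ (((n:ℝ) - 2)/2) := by
  have hn2 : (2:ℝ) ≤ (n:ℝ) := by exact_mod_cast hn
  have hnpos : (0:ℝ) < n := by linarith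
  have hsq : (1:ℝ) < Real.sqrt n := by
    rw [show (1:ℝ) = Real.sqrt 1 by simp]
    exact Real.sqrt_lt_sqrt (by norm_num) (by linarith)
  have hsqpos : (0:ℝ) < Real.sqrt n := by linarith
  set x₀ : ℝ := -1 / Real.sqrt n with hx₀
  have hx₀sq : x₀^2 = 1/(n:ℝ) := by
    rw [hx₀, div_pow]
    rw [Real.sq_sqrt hnpos.le]
    norm_num
  have hx₀mem : x₀ ∈ Set.Ioo (-1:ℝ) 1 := by
    constructor
    · rw [hx₀, neg_div]
      rw [neg_lt_neg_iff]
      rw [div_lt_one hsqpos]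
      exact hsq
    · rw [hx₀]
      have : -1 / Real.sqrt n < 0 := by
        apply div_neg_of_neg_of_pos <;> [norm_num; exact hsqpos]
      linarith
  have hg1 : 0 < Real.Gamma ((n:ℝ)+1) := Real.Gamma_pos_of_pos (by positivity)
  have hg2 : 0 < Real.Gamma ((n:ℝ)+3/2) := Gamma_n_pos n
  have hspi : 0 < Real.sqrt Real.pi := Real.sqrt_pos.mpr Real.pi_pos
  -- c = In n ^ (-(1/2)) equals π^(-1/4) * √(Γ(n+3/2)/Γ(n+1))
  have hc : (In n) ^ (-(1:ℝ)/2)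
      = Real.pi ^ (-(1:ℝ)/4) * Real.sqrt (Real.Gamma ((n:ℝ) + 3/2) / Real.Gamma ((n:ℝ) + 1)) := by
    rw [In_eq, mul_div_assoc, Real.mul_rpow hspi.le (by positivity)]
    congr 1
    · rw [Real.sqrt_eq_rpow, ← Real.rpow_mul Real.pi_pos.le]
      norm_num
    · rw [show Real.Gamma ((n:ℝ)+3/2) / Real.Gamma ((n:ℝ)+1)
          = (Real.Gamma ((n:ℝ)+1) / Real.Gamma ((n:ℝ)+3/2))⁻¹ by rw [inv_div],
        Real.sqrt_eq_rpow, Real.inv_rpow (by positivity),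
        show (-(1:ℝ)/2) = -(1/2:ℝ) by norm_num, Real.rpow_neg (by positivity)]
  -- the smooth local model
  set c : ℝ := (In n) ^ (-(1:ℝ)/2) with hcdef
  have hcpos : 0 < c := Real.rpow_pos_of_pos (In_pos n) _
  have hbase : (0:ℝ) < 1 - x₀^2 := by
    rw [hx₀sq]
    have : 1/(n:ℝ) < 1 := by
      rw [div_lt_one hnpos]; linarith
    linarith
  have hq : HasDerivAt (fun x : ℝ => 1 - x^2) (-(2*x₀)) x₀ := by
    simpa using (hasDerivAt_pow 2 x₀).const_sub 1
  have hgd : HasDerivAt (fun x : ℝ => c * (1 - x^2) ^ ((n:ℝ)/2))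
      (c * (-(2*x₀) * ((n:ℝ)/2) * (1 - x₀^2) ^ ((n:ℝ)/2 - 1))) x₀ :=
    (hq.rpow_const (Or.inl hbase.ne')).const_mul c
  have heq : (fun x : ℝ => c * (1 - x^2) ^ ((n:ℝ)/2)) =ᶠ[nhds x₀] chi n := by
    filter_upwards [Ioo_mem_nhds hx₀mem.1 hx₀mem.2] with x hx
    rw [chi, if_pos (Set.mem_Icc_of_Ioo hx)]
  have hval : c * (-(2*x₀) * ((n:ℝ)/2) * (1 - x₀^2) ^ ((n:ℝ)/2 - 1))
      = Real.pi ^ (-(1:ℝ)/4) * Real.sqrt (Real.Gamma ((n:ℝ) + 3/2) / Real.Gamma ((n:ℝ) + 1))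
        * Real.sqrt n * (1 - 1/(n:ℝ)) ^ (((n:ℝ) - 2)/2) := by
    rw [hx₀sq, hx₀, show ((n:ℝ)/2 - 1) = ((n:ℝ) - 2)/2 by ring, hc]
    rw [show -(2 * (-1 / Real.sqrt n)) * ((n:ℝ)/2) = (n:ℝ) / Real.sqrt n by ring,
      Real.div_sqrt]
    ring
  constructor
  · exact hval ▸ (hgd.congr_of_eventuallyEq heq.symm)
  · have hG : 1 < Real.sqrt (Real.Gamma ((n:ℝ) + 3/2) / Real.Gamma ((n:ℝ) + 1)) := by
      have h1A : 1 < Real.Gamma ((n:ℝ) + 3/2) / Real.Gamma ((n:ℝ) + 1) := by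
        rw [lt_div_iff₀ hg1, one_mul]
        apply Real.Gamma_strictMonoOn_Ici
        · simp only [Set.mem_Ici]; linarith
        · simp only [Set.mem_Ici]; linarith
        · linarith
      calc (1:ℝ) = Real.sqrt 1 := by simp
        _ < _ := Real.sqrt_lt_sqrt (by norm_num) h1A
    have hp : (0:ℝ) < Real.pi ^ (-(1:ℝ)/4) := Real.rpow_pos_of_pos Real.pi_pos _
    have hr : (0:ℝ) < (1 - 1/(n:ℝ)) ^ (((n:ℝ) - 2)/2) := by
      apply Real.rpow_pos_of_pos
      have : 1/(n:ℝ) < 1 := by rw [div_lt_one hnpos]; linarith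
      linarith
    nlinarith [mul_pos (mul_pos hp hsqpos) hr]
end

section
/- Let K : ℝ^D → ℝ be a bounded continuous nonnegative even function with ∫ K dλ = 1, let q be a continuous compactly supported probability density with (q∗K)(x) > 0 for all x ∈ ℝ^D, and let h be a continuous compactly supported function. Then the function F(t) = ∫ q(x) log(((q + t h)∗K)(x)) dx is differentiable at t = 0, with F'(0) = ∫ h(x) · ((q / (q∗K)) ∗ K)(x) dx; consequently the Gâteaux derivative of q ↦ E_q[log(q∗K)] = ∫ q log(q∗K) dx in direction h equals ∫ h(x) [ log((q∗K)(x)) + ((q/(q∗K)) ∗ K)(x) ] dx. -/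
open MeasureTheory

/-- Convolution of a scalar function `f` with a kernel `K` on `ℝ^D`:
`(f∗K)(x) = ∫ f(y) K(x − y) dy`. -/
noncomputable def convK {D : ℕ} (K f : EuclideanSpace ℝ (Fin D) → ℝ)
    (x : EuclideanSpace ℝ (Fin D)) : ℝ :=
  ∫ y, f y * K (x - y)

namespace BlobAux

variable {D : ℕ}

lemma integrable_integrand (K f : EuclideanSpace ℝ (Fin D) → ℝ) (hK : Continuous K)
    (hf : Continuous f) (hfs : HasCompactSupport f) (x : EuclideanSpace ℝ (Fin D)) :
    Integrable (fun y => f y * K (x - y)) := by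
  refine Continuous.integrable_of_hasCompactSupport ?_ ?_
  · exact hf.mul (hK.comp (continuous_const.sub continuous_id))
  · exact hfs.mul_right

lemma convK_cont (K f : EuclideanSpace ℝ (Fin D) → ℝ) (hK : Continuous K)
    (hf : Continuous f) (hfs : HasCompactSupport f) : Continuous (convK K f) := by
  have : convK K f = MeasureTheory.convolution f K (ContinuousLinearMap.lsmul ℝ ℝ) volume := by
    funext x
    simp [convK, MeasureTheory.convolution, ContinuousLinearMap.lsmul_apply, smul_eq_mul]
  rw [this]
  exact hfs.continuous_convolution_left _ hf hK.locallyIntegrable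

lemma convK_bound (K f : EuclideanSpace ℝ (Fin D) → ℝ) (CK : ℝ) (hKbdd : ∀ z, |K z| ≤ CK)
    (hK : Continuous K) (hf : Continuous f) (hfs : HasCompactSupport f)
    (x : EuclideanSpace ℝ (Fin D)) :
    |convK K f x| ≤ (∫ y, |f y|) * CK := by
  have h1 : |convK K f x| ≤ ∫ y, |f y * K (x - y)| := by
    simp only [convK, ← Real.norm_eq_abs]
    exact norm_integral_le_integral_norm _
  refine h1.trans ?_
  rw [← integral_mul_const]
  refine integral_mono (integrable_integrand K f hK hf hfs x).abs ?_ ?_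
  · refine Continuous.integrable_of_hasCompactSupport (hf.abs.mul continuous_const) ?_
    exact hfs.comp_left (g := fun z => |z| * CK) (by simp)
  · intro y
    show |f y * K (x - y)| ≤ |f y| * CK
    rw [abs_mul]
    exact mul_le_mul_of_nonneg_left (hKbdd _) (abs_nonneg _)

lemma convK_add (K q h : EuclideanSpace ℝ (Fin D) → ℝ) (hK : Continuous K)
    (hq : Continuous q) (hqs : HasCompactSupport q)
    (hh : Continuous h) (hhs : HasCompactSupport h) (t : ℝ) (x : EuclideanSpace ℝ (Fin D)) :
    convK K (fun y => q y + t * h y) x = convK K q x + t * convK K h x := by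
  unfold convK
  rw [show (fun y => (q y + t * h y) * K (x - y))
      = fun y => q y * K (x - y) + t * (h y * K (x - y)) from funext fun y => by ring]
  rw [integral_add (integrable_integrand K q hK hq hqs x)
    ((integrable_integrand K h hK hh hhs x).const_mul t), integral_const_mul]

lemma fubini_swap (K c h : EuclideanSpace ℝ (Fin D) → ℝ) (hK : Continuous K)
    (hKeven : ∀ z, K (-z) = K z)
    (hc : Continuous c) (hcs : HasCompactSupport c)
    (hh : Continuous h) (hhs : HasCompactSupport h) :
    ∫ x, c x * convK K h x = ∫ y, h y * convK K c y := by
  have hKsymm : ∀ x y : EuclideanSpace ℝ (Fin D), K (x - y) = K (y - x) := by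
    intro x y
    have := hKeven (y - x)
    rwa [neg_sub] at this
  have hg : Continuous (fun p : (EuclideanSpace ℝ (Fin D)) × (EuclideanSpace ℝ (Fin D)) =>
      c p.1 * (h p.2 * K (p.1 - p.2))) :=
    (hc.comp continuous_fst).mul ((hh.comp continuous_snd).mul
      (hK.comp (continuous_fst.sub continuous_snd)))
  have hgs : HasCompactSupport (fun p : (EuclideanSpace ℝ (Fin D)) × (EuclideanSpace ℝ (Fin D)) =>
      c p.1 * (h p.2 * K (p.1 - p.2))) := by
    refine HasCompactSupport.intro (IsCompact.prod hcs hhs) fun p hp => ?_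
    rcases not_and_or.mp (by simpa [Set.mem_prod] using hp) with h1 | h1
    · simp [image_eq_zero_of_notMem_tsupport h1]
    · simp [image_eq_zero_of_notMem_tsupport h1]
  have hgint : Integrable (Function.uncurry fun x y => c x * (h y * K (x - y)))
      (volume.prod volume) := by
    have : Integrable (fun p : (EuclideanSpace ℝ (Fin D)) × (EuclideanSpace ℝ (Fin D)) =>
        c p.1 * (h p.2 * K (p.1 - p.2))) volume :=
      hg.integrable_of_hasCompactSupport hgs
    rwa [← MeasureTheory.Measure.volume_eq_prod (EuclideanSpace ℝ (Fin D)) (EuclideanSpace ℝ (Fin D))]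
  calc ∫ x, c x * convK K h x
      = ∫ x, ∫ y, c x * (h y * K (x - y)) := by
        refine integral_congr_ae (Filter.Eventually.of_forall fun x => ?_)
        simp only [convK]
        exact (integral_const_mul _ _).symm
    _ = ∫ y, ∫ x, c x * (h y * K (x - y)) := integral_integral_swap hgint
    _ = ∫ y, h y * convK K c y := by
        refine integral_congr_ae (Filter.Eventually.of_forall fun y => ?_)
        simp only [convK]
        rw [show (fun x => c x * (h y * K (x - y)))
            = fun x => h y * (c x * K (y - x)) from funext fun x => by rw [hKsymm x y]; ring,
          integral_const_mul]

lemma aux_main (A B f : EuclideanSpace ℝ (Fin D) → ℝ)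
    (hA : Continuous A) (hApos : ∀ x, 0 < A x) (hB : Continuous B)
    (M : ℝ) (hM : ∀ x, |B x| ≤ M)
    (hf : Continuous f) (hfs : HasCompactSupport f) :
    HasDerivAt (fun t : ℝ => ∫ x, f x * Real.log (A x + t * B x))
      (∫ x, f x * B x / A x) 0 ∧
    ∀ᶠ t : ℝ in nhds 0, Integrable (fun x => f x * Real.log (A x + t * B x)) := by
  have hmeas : ∀ t : ℝ, AEStronglyMeasurable
      (fun x => f x * Real.log (A x + t * B x)) volume := fun t =>
    (hf.measurable.mul (Real.measurable_log.comp
      (hA.measurable.add (hB.measurable.const_mul t)))).aestronglyMeasurable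
  have hbound_int : ∀ C : ℝ, Integrable (fun x => |f x| * C) := by
    intro C
    refine Continuous.integrable_of_hasCompactSupport (hf.abs.mul continuous_const) ?_
    exact hfs.comp_left (g := fun z => |z| * C) (by simp)
  by_cases hne : (tsupport f).Nonempty
  case neg =>
    have hf0 : ∀ x, f x = 0 := fun x =>
      image_eq_zero_of_notMem_tsupport (by simp [Set.not_nonempty_iff_eq_empty.mp hne])
    constructor
    · simp only [hf0, zero_mul, zero_div, integral_zero]
      exact hasDerivAt_const _ _
    · refine Filter.Eventually.of_forall fun t => ?_
      simp only [hf0, zero_mul]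
      exact integrable_zero _ _ _
  case pos =>
  obtain ⟨x₀, hx₀, hmin⟩ := IsCompact.exists_isMinOn hfs hne hA.continuousOn
  obtain ⟨x₁, hx₁, hmax⟩ := IsCompact.exists_isMaxOn hfs hne hA.continuousOn
  set m := A x₀ with hm_def
  have hm : 0 < m := hApos x₀
  have hM0 : 0 ≤ M := le_trans (abs_nonneg _) (hM x₀)
  set M' := M + 1 with hM'def
  have hM' : 0 < M' := by positivity
  set ε := m / (2 * M') with hεdef
  have hε : 0 < ε := by positivity
  have hεM : ε * M' = m / 2 := by
    rw [hεdef]; field_simp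
  have habs : ∀ t ∈ Metric.ball (0 : ℝ) ε, ∀ x, |t * B x| ≤ m / 2 := by
    intro t ht x
    have ht' : |t| ≤ ε := le_of_lt (by simpa [Real.dist_eq] using ht)
    calc |t * B x| = |t| * |B x| := abs_mul _ _
      _ ≤ ε * M' := mul_le_mul ht' ((hM x).trans (by linarith)) (abs_nonneg _) hε.le
      _ = m / 2 := hεM
  have key : ∀ t ∈ Metric.ball (0 : ℝ) ε, ∀ x ∈ tsupport f, m / 2 ≤ A x + t * B x := by
    intro t ht x hx
    have h1 := habs t ht x
    have h2 := neg_abs_le (t * B x)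
    have h3 : m ≤ A x := isMinOn_iff.mp hmin x hx
    linarith
  have keyub : ∀ t ∈ Metric.ball (0 : ℝ) ε, ∀ x ∈ tsupport f,
      A x + t * B x ≤ A x₁ + m / 2 := by
    intro t ht x hx
    have h1 := habs t ht x
    have h2 := le_abs_self (t * B x)
    have h3 : A x ≤ A x₁ := isMaxOn_iff.mp hmax x hx
    linarith
  have denom_pos : ∀ t ∈ Metric.ball (0 : ℝ) ε, ∀ x ∈ tsupport f, 0 < A x + t * B x :=
    fun t ht x hx => lt_of_lt_of_le (by positivity) (key t ht x hx)
  set L := |Real.log (m / 2)| + |Real.log (A x₁ + m / 2)| with hLdef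
  have hlogbdd : ∀ t ∈ Metric.ball (0 : ℝ) ε, ∀ x ∈ tsupport f,
      |Real.log (A x + t * B x)| ≤ L := by
    intro t ht x hx
    have h1 := key t ht x hx
    have h2 := keyub t ht x hx
    rw [abs_le]
    constructor
    · have hlo : Real.log (m / 2) ≤ Real.log (A x + t * B x) :=
        Real.log_le_log (by positivity) h1
      have h3 := neg_abs_le (Real.log (m / 2))
      have h4 := abs_nonneg (Real.log (A x₁ + m / 2))
      rw [hLdef]; linarith
    · have hhi : Real.log (A x + t * B x) ≤ Real.log (A x₁ + m / 2) :=
        Real.log_le_log (denom_pos t ht x hx) h2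
      have h3 := le_abs_self (Real.log (A x₁ + m / 2))
      have h4 := abs_nonneg (Real.log (m / 2))
      rw [hLdef]; linarith
  have main := hasDerivAt_integral_of_dominated_loc_of_deriv_le (μ := volume) (x₀ := (0 : ℝ))
      (F := fun t x => f x * Real.log (A x + t * B x))
      (F' := fun t x => f x * B x / (A x + t * B x))
      (bound := fun x => |f x| * (M' / (m / 2)))
      (Metric.ball_mem_nhds 0 hε) (Filter.Eventually.of_forall hmeas)
      (by
        have hlog : Continuous fun x => Real.log (A x + 0 * B x) :=
          Continuous.log (hA.add (continuous_const.mul hB))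
            (fun x => by simpa using (hApos x).ne')
        exact (hf.mul hlog).integrable_of_hasCompactSupport hfs.mul_right)
      (((hf.measurable.mul hB.measurable).div
        (hA.measurable.add (hB.measurable.const_mul 0))).aestronglyMeasurable)
      (by
        refine Filter.Eventually.of_forall fun x t ht => ?_
        by_cases hx : x ∈ tsupport f
        · have h1 := key t ht x hx
          have h2 : 0 < A x + t * B x := denom_pos t ht x hx
          have hBx : |B x| ≤ M' := (hM x).trans (by linarith)
          show ‖f x * B x / (A x + t * B x)‖ ≤ |f x| * (M' / (m / 2))
          rw [Real.norm_eq_abs, abs_div, abs_mul, abs_of_pos h2, ← mul_div_assoc]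
          exact div_le_div₀ (by positivity)
            (mul_le_mul_of_nonneg_left hBx (abs_nonneg _)) (by positivity) h1
        · have hfx : f x = 0 := image_eq_zero_of_notMem_tsupport hx
          show ‖f x * B x / (A x + t * B x)‖ ≤ |f x| * (M' / (m / 2))
          simp only [hfx, zero_mul, zero_div, norm_zero, abs_zero]
          positivity)
      (hbound_int _)
      (by
        refine Filter.Eventually.of_forall fun x t ht => ?_
        by_cases hx : f x = 0
        · simp only [hx, zero_mul, zero_div]
          exact hasDerivAt_const _ _
        · have hxS : x ∈ tsupport f := subset_tsupport f hx
          have h2 : 0 < A x + t * B x := denom_pos t ht x hxS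
          have hd : HasDerivAt (fun s : ℝ => A x + s * B x) (B x) t :=
            (hasDerivAt_mul_const (B x)).const_add (A x)
          have := (hd.log h2.ne').const_mul (f x)
          simpa [mul_div_assoc] using this)
  constructor
  · simpa using main.2
  · refine Filter.eventually_of_mem (Metric.ball_mem_nhds 0 hε) fun t ht => ?_
    refine Integrable.mono' (hbound_int L) (hmeas t)
      (Filter.Eventually.of_forall fun x => ?_)
    by_cases hx : x ∈ tsupport f
    · show ‖f x * Real.log (A x + t * B x)‖ ≤ |f x| * L
      rw [Real.norm_eq_abs, abs_mul]
      exact mul_le_mul_of_nonneg_left (hlogbdd t ht x hx) (abs_nonneg _)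
    · have hfx : f x = 0 := image_eq_zero_of_notMem_tsupport hx
      show ‖f x * Real.log (A x + t * B x)‖ ≤ |f x| * L
      simp only [hfx, zero_mul, norm_zero, abs_zero]
      positivity

end BlobAux

open BlobAux in
/-- first variation of the smoothed-entropy functional, Blob method. -/
theorem blob_first_variation
    (D : ℕ) (K : EuclideanSpace ℝ (Fin D) → ℝ)
    (hKcont : Continuous K) (CK : ℝ) (hKbdd : ∀ z, |K z| ≤ CK)
    (hKnonneg : ∀ z, 0 ≤ K z) (hKeven : ∀ z, K (-z) = K z)
    (hKone : ∫ z, K z = 1)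
    (q : EuclideanSpace ℝ (Fin D) → ℝ)
    (hqcont : Continuous q) (hqsupp : HasCompactSupport q)
    (hqnonneg : ∀ x, 0 ≤ q x) (hqone : ∫ x, q x = 1)
    (hqKpos : ∀ x, 0 < convK K q x)
    (h : EuclideanSpace ℝ (Fin D) → ℝ)
    (hhcont : Continuous h) (hhsupp : HasCompactSupport h) :
    HasDerivAt
      (fun t : ℝ => ∫ x, q x * Real.log (convK K (fun y => q y + t * h y) x))
      (∫ x, h x * convK K (fun y => q y / convK K q y) x) 0
    ∧ HasDerivAt
        (fun t : ℝ =>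
          ∫ x, (q x + t * h x) * Real.log (convK K (fun y => q y + t * h y) x))
        (∫ x, h x * (Real.log (convK K q x)
            + convK K (fun y => q y / convK K q y) x)) 0 := by
  set A := convK K q with hAdef
  set B := convK K h with hBdef
  set c := fun y => q y / A y with hcdef
  have hAc : Continuous A := convK_cont K q hKcont hqcont hqsupp
  have hBc : Continuous B := convK_cont K h hKcont hhcont hhsupp
  have hApos : ∀ x, 0 < A x := hqKpos
  have hMB : ∀ x, |B x| ≤ (∫ y, |h y|) * CK :=
    convK_bound K h CK hKbdd hKcont hhcont hhsupp
  have hcc : Continuous c := hqcont.div hAc fun x => (hApos x).ne'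
  have hccs : HasCompactSupport c := by
    refine HasCompactSupport.intro hqsupp fun x hx => ?_
    simp [hcdef, image_eq_zero_of_notMem_tsupport hx]
  have hconv : ∀ (t : ℝ) x, convK K (fun y => q y + t * h y) x = A x + t * B x :=
    fun t x => convK_add K q h hKcont hqcont hqsupp hhcont hhsupp t x
  have hq' := aux_main A B q hAc hApos hBc _ hMB hqcont hqsupp
  have hh' := aux_main A B h hAc hApos hBc _ hMB hhcont hhsupp
  have hfub : (∫ x, q x * B x / A x) = ∫ x, h x * convK K c x := by
    have h1 : (∫ x, q x * B x / A x) = ∫ x, c x * convK K h x := by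
      refine integral_congr_ae (Filter.Eventually.of_forall fun x => ?_)
      show q x * B x / A x = c x * convK K h x
      rw [mul_div_right_comm]
    rw [h1]
    exact fubini_swap K c h hKcont hKeven hcc hccs hhcont hhsupp
  constructor
  · simp only [hconv]
    rw [← hfub]
    exact hq'.1
  · have hH := hh'.1
    have hF := hq'.1
    have hprod : HasDerivAt (fun t : ℝ => t * ∫ x, h x * Real.log (A x + t * B x))
        (∫ x, h x * Real.log (A x + 0 * B x)) 0 := by
      have := (hasDerivAt_id' (0 : ℝ)).mul hH
      simpa [Pi.mul_def] using this
    have hsum := hF.add hprod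
    have heq : (fun t : ℝ => ∫ x, (q x + t * h x) * Real.log (A x + t * B x))
        =ᶠ[nhds 0] fun t : ℝ => (∫ x, q x * Real.log (A x + t * B x))
          + t * ∫ x, h x * Real.log (A x + t * B x) := by
      filter_upwards [hq'.2, hh'.2] with t h1 h2
      rw [show (fun x => (q x + t * h x) * Real.log (A x + t * B x))
          = fun x => q x * Real.log (A x + t * B x)
            + t * (h x * Real.log (A x + t * B x)) from funext fun x => by ring,
        integral_add h1 (h2.const_mul t), integral_const_mul]
    have hgoal := hsum.congr_of_eventuallyEq heq
    simp only [hconv]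
    convert hgoal using 1
    · rfl
    · rfl
    have hint1 : Integrable (fun x => h x * Real.log (A x)) :=
      Continuous.integrable_of_hasCompactSupport
        (hhcont.mul (hAc.log fun x => (hApos x).ne')) hhsupp.mul_right
    have hint2 : Integrable (fun x => h x * convK K c x) :=
      Continuous.integrable_of_hasCompactSupport
        (hhcont.mul (convK_cont K c hKcont hcc hccs)) hhsupp.mul_right
    simp only [zero_mul, add_zero, mul_add]
    rw [integral_add hint1 hint2, ← hfub]
    ring
end
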